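/- Let M be a real m×n matrix with singular value decomposition M = [U_1 U_2]·diag(Σ_1, Σ_2)·[V_1 V_2]^*, where Σ_1 is the r×r diagonal matrix of the r largest singular values of M and the columns of V_1 are the corresponding r top right singular vectors. Let H be an n×l matrix with ||H||_2 ≤ 1, write C_1 = V_1^*H and C_2 = V_2^*H, and assume rank(C_1) = r. Let XY = MH(MH)^+M be the orthogonal projection of M onto the column space of MH. Then ||M − XY||² ≤ ||Σ_2||² + ||Σ_2 C_2 C_1^+||², where ||·|| denotes either the spectral norm or the Frobenius norm (the inequality holds for both norms). -/

import Mathlib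

open Matrix MeasureTheory ProbabilityTheory Real
open scoped BigOperators ENNReal

noncomputable section

namespace LRA

/-- The `j`-th largest singular value (1-indexed) of a real `m × n` matrix;
by convention it is `0` for `j = 0` or `j > n`. -/
noncomputable def sval {m n : ℕ} (A : Matrix (Fin m) (Fin n) ℝ) (j : ℕ) : ℝ :=
  if hj : 1 ≤ j ∧ j ≤ n then
    Real.sqrt ((by simpa using Matrix.isHermitian_conjTranspose_mul_self A :
        (Aᵀ * A).IsHermitian).eigenvalues
      (Tuple.sort (by simpa using Matrix.isHermitian_conjTranspose_mul_self A :
        (Aᵀ * A).IsHermitian).eigenvalues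
        (Fin.rev ⟨j - 1, by omega⟩)))
  else 0

/-- Spectral norm: the largest singular value. -/
noncomputable def specNorm {m n : ℕ} (A : Matrix (Fin m) (Fin n) ℝ) : ℝ := sval A 1

/-- Frobenius norm. -/
noncomputable def frobNorm {m n : ℕ} (A : Matrix (Fin m) (Fin n) ℝ) : ℝ :=
  Real.sqrt (∑ i, ∑ j, (A i j) ^ 2)

/-- The optimal Frobenius rank-`r` approximation error `(∑_{j>r} σ_j(A)²)^{1/2}`. -/
noncomputable def frobTail {m n : ℕ} (A : Matrix (Fin m) (Fin n) ℝ) (r : ℕ) : ℝ :=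
  Real.sqrt (∑ j ∈ Finset.Ioc r n, sval A j ^ 2)

/-- The four Penrose conditions. -/
def IsMoorePenrose {m n : ℕ} (A : Matrix (Fin m) (Fin n) ℝ)
    (B : Matrix (Fin n) (Fin m) ℝ) : Prop :=
  A * B * A = A ∧ B * A * B = B ∧ (A * B)ᵀ = A * B ∧ (B * A)ᵀ = B * A

open scoped Classical in
/-- The Moore–Penrose pseudoinverse. -/
noncomputable def pinv {m n : ℕ} (A : Matrix (Fin m) (Fin n) ℝ) :
    Matrix (Fin n) (Fin m) ℝ :=
  if h : ∃ B, IsMoorePenrose A B then h.choose else 0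

/-- The `r`-projective volume `∏_{j=1}^r σ_j(A)`. -/
noncomputable def pvol {m n : ℕ} (r : ℕ) (A : Matrix (Fin m) (Fin n) ℝ) : ℝ :=
  ∏ j ∈ Finset.Icc 1 r, sval A j

instance matrixMeasurableSpace {p q : ℕ} : MeasurableSpace (Matrix (Fin p) (Fin q) ℝ) :=
  MeasurableSpace.pi

/-- A random matrix all of whose entries are i.i.d. standard normal random variables. -/
def IsGaussianMatrix {Ω : Type*} [MeasurableSpace Ω] (μ : Measure Ω) {p q : ℕ}
    (G : Ω → Matrix (Fin p) (Fin q) ℝ) : Prop :=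
  Measurable G ∧
  iIndepFun (β := fun _ : Fin p × Fin q => ℝ)
    (fun ij ω => G ω ij.1 ij.2) μ ∧
  ∀ i j, Measure.map (fun ω => G ω i j) μ = gaussianReal 0 1

/-- The `k × l` submatrix of `W` with rows indexed by `I` and columns by `J`. -/
noncomputable def subm {m n k l : ℕ} (W : Matrix (Fin m) (Fin n) ℝ)
    {I : Finset (Fin m)} {J : Finset (Fin n)} (hI : I.card = k) (hJ : J.card = l) :
    Matrix (Fin k) (Fin l) ℝ :=
  W.submatrix (fun i => ((I.orderIsoOfFin hI i : I) : Fin m))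
    (fun j => ((J.orderIsoOfFin hJ j : J) : Fin n))


/-! ### Auxiliary lemmas -/

private lemma dp_cs {n : ℕ} (u v : Fin n → ℝ) : (u ⬝ᵥ v) ^ 2 ≤ (u ⬝ᵥ u) * (v ⬝ᵥ v) := by
  simpa [dotProduct, pow_two, mul_pow] using
    Finset.sum_mul_sq_le_sq_mul_sq Finset.univ u v

private lemma dp_self_nonneg {n : ℕ} (u : Fin n → ℝ) : 0 ≤ u ⬝ᵥ u :=
  Finset.sum_nonneg fun _ _ => mul_self_nonneg _

private lemma quad_eq {m n : ℕ} (A : Matrix (Fin m) (Fin n) ℝ) (x : Fin n → ℝ) :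
    x ⬝ᵥ ((Aᵀ * A) *ᵥ x) = (A *ᵥ x) ⬝ᵥ (A *ᵥ x) := by
  rw [← mulVec_mulVec, dotProduct_mulVec, ← mulVec_transpose, transpose_transpose]

private lemma specNorm_spec {m n : ℕ} (A : Matrix (Fin m) (Fin n) ℝ) :
    0 ≤ specNorm A ∧ (∀ x, (A *ᵥ x) ⬝ᵥ (A *ᵥ x) ≤ specNorm A ^ 2 * (x ⬝ᵥ x)) ∧
    (∀ c, 0 ≤ c → (∀ x, (A *ᵥ x) ⬝ᵥ (A *ᵥ x) ≤ c * (x ⬝ᵥ x)) → specNorm A ^ 2 ≤ c) := by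
  rcases Nat.eq_zero_or_pos n with hn | hn
  · subst hn
    have hs : specNorm A = 0 := by
      rw [specNorm, sval, dif_neg]; omega
    refine ⟨hs.ge, fun x => ?_, fun c hc _ => by simp [hs, hc]⟩
    have hx : x = 0 := Subsingleton.elim _ _
    simp [hx, hs]
  · have hB : (Aᵀ * A).IsHermitian := by
      simpa using Matrix.isHermitian_conjTranspose_mul_self A
    set μ : Fin n → ℝ := hB.eigenvalues with hμdef
    set V : Matrix (Fin n) (Fin n) ℝ := (hB.eigenvectorUnitary : Matrix (Fin n) (Fin n) ℝ) with hV
    have hVtV : Vᵀ * V = 1 := by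
      have := Matrix.mem_unitaryGroup_iff'.mp hB.eigenvectorUnitary.2
      simpa [star_eq_conjTranspose, conjTranspose_eq_transpose_of_trivial] using this
    have hspec : Aᵀ * A = V * diagonal μ * Vᵀ := by
      have := hB.spectral_theorem
      simpa [star_eq_conjTranspose, conjTranspose_eq_transpose_of_trivial,
        Function.comp] using this
    have hquad : ∀ x : Fin n → ℝ, x ⬝ᵥ ((Aᵀ * A) *ᵥ x) = ∑ i, μ i * ((Vᵀ *ᵥ x) i) ^ 2 := by
      intro x
      have h1 : (Aᵀ * A) *ᵥ x = V *ᵥ (diagonal μ *ᵥ (Vᵀ *ᵥ x)) := by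
        rw [hspec, mulVec_mulVec, mulVec_mulVec]
      rw [h1, dotProduct_mulVec, ← mulVec_transpose]
      simp only [dotProduct, mulVec_diagonal]
      exact Finset.sum_congr rfl fun i _ => by ring
    have hnorm : ∀ x : Fin n → ℝ, (Vᵀ *ᵥ x) ⬝ᵥ (Vᵀ *ᵥ x) = x ⬝ᵥ x := by
      intro x
      have hVVt : V * Vᵀ = 1 := by
        have := Matrix.mem_unitaryGroup_iff.mp hB.eigenvectorUnitary.2
        simpa [star_eq_conjTranspose, conjTranspose_eq_transpose_of_trivial] using this
      rw [dotProduct_mulVec, ← mulVec_transpose, transpose_transpose, mulVec_mulVec, hVVt,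
        one_mulVec]
    have hcol : ∀ i : Fin n, Vᵀ *ᵥ (fun k => V k i) = Pi.single i 1 := by
      intro i; funext j
      have : (Vᵀ * V) j i = (1 : Matrix (Fin n) (Fin n) ℝ) j i := by rw [hVtV]
      simpa [mul_apply, mulVec, dotProduct, one_apply, Pi.single_apply] using this
    have hcolnorm : ∀ i : Fin n, (fun k => V k i) ⬝ᵥ (fun k => V k i) = 1 := by
      intro i
      have : (Vᵀ * V) i i = (1 : Matrix (Fin n) (Fin n) ℝ) i i := by rw [hVtV]
      simpa [mul_apply, dotProduct, one_apply] using this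
    have hquadcol : ∀ i : Fin n, (fun k => V k i) ⬝ᵥ ((Aᵀ * A) *ᵥ (fun k => V k i)) = μ i := by
      intro i
      rw [hquad, hcol i]
      rw [Finset.sum_eq_single i]
      · simp
      · intro b _ hb; simp [Pi.single_apply, hb]
      · simp
    have hμnonneg : ∀ i, 0 ≤ μ i := fun i => by
      rw [← hquadcol i, quad_eq]; exact dp_self_nonneg _
    set itop : Fin n := Tuple.sort μ (Fin.rev ⟨0, by omega⟩) with hitop
    have htople : ∀ i, μ i ≤ μ itop := by
      intro i
      have h1 : (Tuple.sort μ).symm i ≤ Fin.rev ⟨0, by omega⟩ := by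
        rw [Fin.le_def]; simp [Fin.rev]; omega
      have := Tuple.monotone_sort μ h1
      simpa using this
    have hsn : specNorm A = Real.sqrt (μ itop) := by
      rw [specNorm, sval, dif_pos ⟨le_refl 1, hn⟩]
    have hsq : specNorm A ^ 2 = μ itop := by
      rw [hsn, Real.sq_sqrt (hμnonneg itop)]
    refine ⟨by rw [hsn]; exact Real.sqrt_nonneg _, fun x => ?_, fun c hc hcle => ?_⟩
    · rw [← quad_eq, hquad, hsq, ← hnorm x]
      calc ∑ i, μ i * ((Vᵀ *ᵥ x) i) ^ 2 ≤ ∑ i, μ itop * ((Vᵀ *ᵥ x) i) ^ 2 :=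
            Finset.sum_le_sum fun i _ => mul_le_mul_of_nonneg_right (htople i) (sq_nonneg _)
        _ = μ itop * ((Vᵀ *ᵥ x) ⬝ᵥ (Vᵀ *ᵥ x)) := by
            simp only [dotProduct, Finset.mul_sum]
            exact Finset.sum_congr rfl fun i _ => by ring
        _ = _ := rfl
    · rw [hsq]
      have := hcle (fun k => V k itop)
      rw [← quad_eq, hquadcol itop, hcolnorm itop, mul_one] at this
      exact this

private lemma specNorm_nonneg' {m n : ℕ} (A : Matrix (Fin m) (Fin n) ℝ) : 0 ≤ specNorm A :=
  (specNorm_spec A).1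

private lemma specNorm_mulVec_le {m n : ℕ} (A : Matrix (Fin m) (Fin n) ℝ) (x : Fin n → ℝ) :
    (A *ᵥ x) ⬝ᵥ (A *ᵥ x) ≤ specNorm A ^ 2 * (x ⬝ᵥ x) :=
  (specNorm_spec A).2.1 x

private lemma specNorm_sq_le {m n : ℕ} (A : Matrix (Fin m) (Fin n) ℝ) {c : ℝ} (hc : 0 ≤ c)
    (h : ∀ x, (A *ᵥ x) ⬝ᵥ (A *ᵥ x) ≤ c * (x ⬝ᵥ x)) : specNorm A ^ 2 ≤ c :=
  (specNorm_spec A).2.2 c hc h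

private lemma specNorm_sq_le_transpose {m n : ℕ} (A : Matrix (Fin m) (Fin n) ℝ) :
    specNorm A ^ 2 ≤ specNorm Aᵀ ^ 2 := by
  refine specNorm_sq_le A (sq_nonneg _) fun x => ?_
  set w := A *ᵥ x with hw
  have h1 : w ⬝ᵥ (A *ᵥ x) = (Aᵀ *ᵥ w) ⬝ᵥ x := by
    rw [dotProduct_mulVec, ← mulVec_transpose]
  have h2 : ((Aᵀ *ᵥ w) ⬝ᵥ x) ^ 2 ≤ ((Aᵀ *ᵥ w) ⬝ᵥ (Aᵀ *ᵥ w)) * (x ⬝ᵥ x) := dp_cs _ _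
  have h3 : (Aᵀ *ᵥ w) ⬝ᵥ (Aᵀ *ᵥ w) ≤ specNorm Aᵀ ^ 2 * (w ⬝ᵥ w) := specNorm_mulVec_le Aᵀ w
  rcases eq_or_lt_of_le (dp_self_nonneg w) with h0 | h0
  · rw [← h0]
    exact mul_nonneg (sq_nonneg _) (dp_self_nonneg x)
  · have h4 : (w ⬝ᵥ w) ^ 2 ≤ specNorm Aᵀ ^ 2 * (w ⬝ᵥ w) * (x ⬝ᵥ x) := by
      calc (w ⬝ᵥ w) ^ 2 = (w ⬝ᵥ (A *ᵥ x)) ^ 2 := by rw [← hw]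
        _ = ((Aᵀ *ᵥ w) ⬝ᵥ x) ^ 2 := by rw [h1]
        _ ≤ ((Aᵀ *ᵥ w) ⬝ᵥ (Aᵀ *ᵥ w)) * (x ⬝ᵥ x) := h2
        _ ≤ specNorm Aᵀ ^ 2 * (w ⬝ᵥ w) * (x ⬝ᵥ x) :=
            mul_le_mul_of_nonneg_right h3 (dp_self_nonneg x)
    nlinarith [h0]

private lemma exists_isMoorePenrose {m n : ℕ} (A : Matrix (Fin m) (Fin n) ℝ) :
    ∃ B, IsMoorePenrose A B := by
  have hB : (Aᵀ * A).IsHermitian := by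
    simpa using Matrix.isHermitian_conjTranspose_mul_self A
  set μ : Fin n → ℝ := hB.eigenvalues with hμdef
  set V : Matrix (Fin n) (Fin n) ℝ := (hB.eigenvectorUnitary : Matrix (Fin n) (Fin n) ℝ) with hV
  have hVtV : Vᵀ * V = 1 := by
    have := Matrix.mem_unitaryGroup_iff'.mp hB.eigenvectorUnitary.2
    simpa [star_eq_conjTranspose, conjTranspose_eq_transpose_of_trivial] using this
  set S : (Fin n → ℝ) → Matrix (Fin n) (Fin n) ℝ := fun a => V * diagonal a * Vᵀ with hS
  have hmulS : ∀ a b, S a * S b = S (fun i => a i * b i) := by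
    intro a b
    have h1 : S a * S b = V * diagonal a * (Vᵀ * V) * (diagonal b * Vᵀ) := by
      simp only [hS, Matrix.mul_assoc]
    rw [h1, hVtV, Matrix.mul_one]
    simp only [hS, Matrix.mul_assoc]
    rw [← Matrix.mul_assoc (diagonal a) (diagonal b), diagonal_mul_diagonal]
  have hsymS : ∀ a, (S a)ᵀ = S a := by
    intro a
    simp only [hS, transpose_mul, diagonal_transpose, transpose_transpose, Matrix.mul_assoc]
  have hBm : Aᵀ * A = S μ := by
    have := hB.spectral_theorem
    simpa [star_eq_conjTranspose, conjTranspose_eq_transpose_of_trivial,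
      Function.comp] using this
  set Q : Matrix (Fin n) (Fin n) ℝ := S (fun i => μ i * (μ i)⁻¹) with hQ
  have hQsym : Qᵀ = Q := hsymS _
  have hQSμ : Q * S μ = S μ := by
    rw [hQ, hmulS]
    congr 1; funext i
    rcases eq_or_ne (μ i) 0 with h | h <;> field_simp [h]
  have hSμQ : S μ * Q = S μ := by
    rw [hQ, hmulS]
    congr 1; funext i
    rcases eq_or_ne (μ i) 0 with h | h <;> field_simp [h]
  have hkey : Q * Aᵀ = Aᵀ := by
    set N : Matrix (Fin n) (Fin m) ℝ := Aᵀ - Q * Aᵀ with hN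
    have hNNt : N * Nᵀ = 0 := by
      have hNt : Nᵀ = A - A * Q := by
        rw [hN, transpose_sub, transpose_mul, hQsym, transpose_transpose]
      have e1 : Aᵀ * (A * Q) = S μ * Q := by rw [← Matrix.mul_assoc, hBm]
      have e2 : Q * Aᵀ * A = Q * S μ := by rw [Matrix.mul_assoc, hBm]
      have e3 : Q * Aᵀ * (A * Q) = Q * S μ * Q := by
        rw [Matrix.mul_assoc Q Aᵀ (A * Q), ← Matrix.mul_assoc Aᵀ A Q, hBm,
          ← Matrix.mul_assoc Q (S μ) Q]
      rw [hN, hNt, Matrix.sub_mul, Matrix.mul_sub, Matrix.mul_sub, e1, e2, e3, hBm]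
      simp only [hSμQ, hQSμ]
      simp
    have hNt0 : Nᵀ = 0 := by
      refine Matrix.conjTranspose_mul_self_eq_zero.mp ?_
      rw [conjTranspose_eq_transpose_of_trivial, transpose_transpose, hNNt]
    have hN0 : N = 0 := by
      have := congrArg transpose hNt0
      simpa using this
    rw [hN] at hN0
    exact (sub_eq_zero.mp hN0).symm
  set B0 : Matrix (Fin n) (Fin n) ℝ := S (fun i => (μ i)⁻¹) with hB0
  have hB0sym : B0ᵀ = B0 := hsymS _
  have hB0Sμ : B0 * S μ = Q := by
    rw [hB0, hQ, hmulS]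
    have : (fun i => (μ i)⁻¹ * μ i) = fun i => μ i * (μ i)⁻¹ := by
      funext i; exact mul_comm _ _
    rw [this]
  have hSμB0 : S μ * B0 = Q := by rw [hQ, hmulS]
  have hB0SμB0 : B0 * S μ * B0 = B0 := by
    rw [hB0Sμ, hQ, hB0, hmulS]
    congr 1; funext i
    rcases eq_or_ne (μ i) 0 with h | h <;> field_simp [h]
  refine ⟨B0 * Aᵀ, ?_, ?_, ?_, ?_⟩
  · have h5 : A * (B0 * Aᵀ) * A = A * (B0 * (Aᵀ * A)) := by
      simp only [Matrix.mul_assoc]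
    have e4 : A * (B0 * S μ) = A * Q := congrArg (fun X => A * X) hB0Sμ
    rw [h5, hBm, e4]
    have h6 := congrArg transpose hkey
    rw [transpose_mul, hQsym, transpose_transpose] at h6
    exact h6
  · have e : B0 * Aᵀ * A * (B0 * Aᵀ) = (B0 * S μ * B0) * Aᵀ := by
      rw [Matrix.mul_assoc B0 Aᵀ A, hBm]
      simp only [Matrix.mul_assoc]
    rw [e, hB0SμB0]
  · rw [transpose_mul, transpose_mul, hB0sym, transpose_transpose, Matrix.mul_assoc]
  · have e2 : B0 * Aᵀ * A = Q := by rw [Matrix.mul_assoc, hBm, hB0Sμ]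
    rw [e2, hQsym]

private lemma pinv_isMP {m n : ℕ} (A : Matrix (Fin m) (Fin n) ℝ) :
    IsMoorePenrose A (pinv A) := by
  rw [pinv, dif_pos (exists_isMoorePenrose A)]
  exact (exists_isMoorePenrose A).choose_spec

private lemma idem_eq_one {r l : ℕ} (C : Matrix (Fin r) (Fin l) ℝ)
    (hC : C.rank = r) (P : Matrix (Fin r) (Fin r) ℝ)
    (hPC : P * C = C) (hPP : P * P = P) : P = 1 := by
  have hrankP : P.rank = r := by
    refine le_antisymm (Matrix.rank_le_height P) ?_
    calc r = C.rank := hC.symm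
      _ = (P * C).rank := by rw [hPC]
      _ ≤ P.rank := Matrix.rank_mul_le_left P C
  have htop : LinearMap.range P.mulVecLin = ⊤ := by
    apply Submodule.eq_top_of_finrank_eq
    rw [← Matrix.rank, hrankP, Module.finrank_fin_fun]
  have hfix : ∀ y : Fin r → ℝ, P *ᵥ y = y := by
    intro y
    obtain ⟨x, hx⟩ := LinearMap.range_eq_top.mp htop y
    have : P *ᵥ (P *ᵥ x) = P *ᵥ x := by
      rw [mulVec_mulVec, hPP]
    rw [Matrix.mulVecLin_apply] at hx
    rw [← hx, this]
  ext i j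
  have := congrFun (hfix (Pi.single j 1)) i
  rw [mulVec_single] at this
  simpa [Pi.single_apply, one_apply, eq_comm] using this

private lemma frobNorm_sq_rows {m n : ℕ} (X : Matrix (Fin m) (Fin n) ℝ) :
    frobNorm X ^ 2 = ∑ i, (X * Xᵀ) i i := by
  rw [frobNorm, Real.sq_sqrt (Finset.sum_nonneg fun i _ =>
    Finset.sum_nonneg fun j _ => sq_nonneg (X i j))]
  simp only [mul_apply, transpose_apply, pow_two]

private lemma frobNorm_sq_cols {m n : ℕ} (X : Matrix (Fin m) (Fin n) ℝ) :
    frobNorm X ^ 2 = ∑ j, (X *ᵥ Pi.single j 1) ⬝ᵥ (X *ᵥ Pi.single j 1) := by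
  rw [frobNorm, Real.sq_sqrt (Finset.sum_nonneg fun i _ =>
    Finset.sum_nonneg fun j _ => sq_nonneg (X i j))]
  rw [Finset.sum_comm]
  refine Finset.sum_congr rfl fun j _ => ?_
  simp [mulVec_single, dotProduct, pow_two]

theorem rangeFinder_error_bound {m n l r : ℕ} (hrm : r ≤ m) (hrn : r ≤ n)
    (M : Matrix (Fin m) (Fin n) ℝ)
    (U1 : Matrix (Fin m) (Fin r) ℝ) (U2 : Matrix (Fin m) (Fin (m - r)) ℝ)
    (V1 : Matrix (Fin n) (Fin r) ℝ) (V2 : Matrix (Fin n) (Fin (n - r)) ℝ)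
    (hU1 : U1ᵀ * U1 = 1) (hU2 : U2ᵀ * U2 = 1) (hU12 : U1ᵀ * U2 = 0)
    (hV1 : V1ᵀ * V1 = 1) (hV2 : V2ᵀ * V2 = 1) (hV12 : V1ᵀ * V2 = 0)
    (S1 : Matrix (Fin r) (Fin r) ℝ) (S2 : Matrix (Fin (m - r)) (Fin (n - r)) ℝ)
    (hS1 : S1 = Matrix.diagonal fun i : Fin r => sval M ((i : ℕ) + 1))
    (hS2 : S2 = Matrix.of fun (i : Fin (m - r)) (j : Fin (n - r)) =>
      if (i : ℕ) = (j : ℕ) then sval M (r + (j : ℕ) + 1) else 0)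
    (hSVD : M = U1 * S1 * V1ᵀ + U2 * S2 * V2ᵀ)
    (H : Matrix (Fin n) (Fin l) ℝ) (hH : specNorm H ≤ 1)
    (C1 : Matrix (Fin r) (Fin l) ℝ) (C2 : Matrix (Fin (n - r)) (Fin l) ℝ)
    (hC1 : C1 = V1ᵀ * H) (hC2 : C2 = V2ᵀ * H) (hC1rank : C1.rank = r) :
    specNorm (M - M * H * pinv (M * H) * M) ^ 2 ≤
        specNorm S2 ^ 2 + specNorm (S2 * C2 * pinv C1) ^ 2 ∧
    frobNorm (M - M * H * pinv (M * H) * M) ^ 2 ≤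
        frobNorm S2 ^ 2 + frobNorm (S2 * C2 * pinv C1) ^ 2  := by
  set A := M * H with hAdef
  have hAMP := pinv_isMP A
  have hC1MP := pinv_isMP C1
  have hC1right : C1 * pinv C1 = 1 := by
    refine idem_eq_one C1 hC1rank (C1 * pinv C1) hC1MP.1 ?_
    calc C1 * pinv C1 * (C1 * pinv C1) = (C1 * pinv C1 * C1) * pinv C1 := by
          simp only [Matrix.mul_assoc]
      _ = C1 * pinv C1 := by rw [hC1MP.1]
  set K : Matrix (Fin (m - r)) (Fin r) ℝ := S2 * C2 * pinv C1 with hK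
  have hA : A = U1 * S1 * C1 + U2 * S2 * C2 := by
    rw [hAdef, hSVD, Matrix.add_mul, hC1, hC2]
    simp only [Matrix.mul_assoc]
  set Z : Matrix (Fin m) (Fin r) ℝ := A * pinv C1 with hZdef
  have hZ : Z = U1 * S1 + U2 * K := by
    rw [hZdef, hA, Matrix.add_mul, hK]
    congr 1
    · calc U1 * S1 * C1 * pinv C1 = U1 * S1 * (C1 * pinv C1) := by
            simp only [Matrix.mul_assoc]
        _ = U1 * S1 := by rw [hC1right, Matrix.mul_one]
    · simp only [Matrix.mul_assoc]
  set G : Matrix (Fin (m - r)) (Fin n) ℝ := S2 * V2ᵀ - K * V1ᵀ with hG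
  set X : Matrix (Fin m) (Fin n) ℝ := U2 * G with hX
  have hM : M = Z * V1ᵀ + X := by
    rw [hZ, hX, hG, Matrix.add_mul, Matrix.mul_sub, hSVD]
    simp only [Matrix.mul_assoc]
    abel
  set P : Matrix (Fin m) (Fin m) ℝ := A * pinv A with hP
  have hPZ : P * Z = Z := by
    rw [hP, hZdef]
    calc A * pinv A * (A * pinv C1) = (A * pinv A * A) * pinv C1 := by
          simp only [Matrix.mul_assoc]
      _ = A * pinv C1 := by rw [hAMP.1]
  have hPsym : Pᵀ = P := hAMP.2.2.1
  have hPP : P * P = P := by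
    rw [hP]
    calc A * pinv A * (A * pinv A) = (A * pinv A * A) * pinv A := by
          simp only [Matrix.mul_assoc]
      _ = A * pinv A := by rw [hAMP.1]
  have hE : M - A * pinv A * M = X - P * X := by
    rw [← hP]
    calc M - P * M = (Z * V1ᵀ + X) - P * (Z * V1ᵀ + X) := by rw [← hM]
      _ = (Z * V1ᵀ + X) - (P * (Z * V1ᵀ) + P * X) := by rw [Matrix.mul_add]
      _ = (Z * V1ᵀ + X) - ((P * Z) * V1ᵀ + P * X) := by
          rw [← Matrix.mul_assoc P Z V1ᵀ]
      _ = X - P * X := by rw [hPZ]; abel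
  have hV21 : V2ᵀ * V1 = 0 := by
    have := congrArg transpose hV12
    simpa using this
  have hGGt : G * Gᵀ = S2 * S2ᵀ + K * Kᵀ := by
    have ht : Gᵀ = V2 * S2ᵀ - V1 * Kᵀ := by
      rw [hG, transpose_sub, transpose_mul, transpose_mul, transpose_transpose,
        transpose_transpose]
    rw [ht, hG, Matrix.sub_mul, Matrix.mul_sub, Matrix.mul_sub]
    have e1 : S2 * V2ᵀ * (V2 * S2ᵀ) = S2 * S2ᵀ := by
      rw [Matrix.mul_assoc, ← Matrix.mul_assoc V2ᵀ V2 S2ᵀ, hV2, Matrix.one_mul]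
    have e2 : S2 * V2ᵀ * (V1 * Kᵀ) = 0 := by
      rw [Matrix.mul_assoc, ← Matrix.mul_assoc V2ᵀ V1 Kᵀ, hV21, Matrix.zero_mul,
        Matrix.mul_zero]
    have e3 : K * V1ᵀ * (V2 * S2ᵀ) = 0 := by
      rw [Matrix.mul_assoc, ← Matrix.mul_assoc V1ᵀ V2 S2ᵀ, hV12, Matrix.zero_mul,
        Matrix.mul_zero]
    have e4 : K * V1ᵀ * (V1 * Kᵀ) = K * Kᵀ := by
      rw [Matrix.mul_assoc, ← Matrix.mul_assoc V1ᵀ V1 Kᵀ, hV1, Matrix.one_mul]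
    rw [e1, e2, e3, e4]
    simp
  have hcontr : ∀ v : Fin n → ℝ,
      ((X - P * X) *ᵥ v) ⬝ᵥ ((X - P * X) *ᵥ v) ≤ (X *ᵥ v) ⬝ᵥ (X *ᵥ v) := by
    intro v
    have hEv : (X - P * X) *ᵥ v = X *ᵥ v - P *ᵥ (X *ᵥ v) := by
      rw [Matrix.sub_mulVec, ← mulVec_mulVec v P X]
    have hq := quad_eq P (X *ᵥ v)
    rw [hPsym, hPP] at hq
    rw [hEv, sub_dotProduct, dotProduct_sub, dotProduct_sub]
    have hcomm := dotProduct_comm (P *ᵥ (X *ᵥ v)) (X *ᵥ v)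
    have hz := dp_self_nonneg (P *ᵥ (X *ᵥ v))
    linarith
  have hXG : ∀ v : Fin n → ℝ, (X *ᵥ v) ⬝ᵥ (X *ᵥ v) = (G *ᵥ v) ⬝ᵥ (G *ᵥ v) := by
    intro v
    rw [hX, ← mulVec_mulVec, ← quad_eq U2 (G *ᵥ v), hU2, one_mulVec]
  have hGbound : specNorm G ^ 2 ≤ specNorm S2 ^ 2 + specNorm K ^ 2 := by
    have hGt : specNorm Gᵀ ^ 2 ≤ specNorm S2 ^ 2 + specNorm K ^ 2 := by
      refine specNorm_sq_le Gᵀ (by positivity) fun v => ?_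
      have h1 : (Gᵀ *ᵥ v) ⬝ᵥ (Gᵀ *ᵥ v) = v ⬝ᵥ ((G * Gᵀ) *ᵥ v) := by
        have hq := quad_eq Gᵀ v
        rw [transpose_transpose] at hq
        exact hq.symm
      have h2 : v ⬝ᵥ ((S2 * S2ᵀ) *ᵥ v) ≤ specNorm S2 ^ 2 * (v ⬝ᵥ v) := by
        have hq := quad_eq S2ᵀ v
        rw [transpose_transpose] at hq
        rw [hq]
        calc (S2ᵀ *ᵥ v) ⬝ᵥ (S2ᵀ *ᵥ v) ≤ specNorm S2ᵀ ^ 2 * (v ⬝ᵥ v) :=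
              specNorm_mulVec_le _ _
          _ ≤ specNorm S2ᵀᵀ ^ 2 * (v ⬝ᵥ v) :=
              mul_le_mul_of_nonneg_right (specNorm_sq_le_transpose S2ᵀ) (dp_self_nonneg v)
          _ = specNorm S2 ^ 2 * (v ⬝ᵥ v) := by rw [transpose_transpose]
      have h3 : v ⬝ᵥ ((K * Kᵀ) *ᵥ v) ≤ specNorm K ^ 2 * (v ⬝ᵥ v) := by
        have hq := quad_eq Kᵀ v
        rw [transpose_transpose] at hq
        rw [hq]
        calc (Kᵀ *ᵥ v) ⬝ᵥ (Kᵀ *ᵥ v) ≤ specNorm Kᵀ ^ 2 * (v ⬝ᵥ v) :=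
              specNorm_mulVec_le _ _
          _ ≤ specNorm Kᵀᵀ ^ 2 * (v ⬝ᵥ v) :=
              mul_le_mul_of_nonneg_right (specNorm_sq_le_transpose Kᵀ) (dp_self_nonneg v)
          _ = specNorm K ^ 2 * (v ⬝ᵥ v) := by rw [transpose_transpose]
      rw [h1, hGGt, Matrix.add_mulVec, dotProduct_add, add_mul]
      exact add_le_add h2 h3
    calc specNorm G ^ 2 ≤ specNorm Gᵀ ^ 2 := specNorm_sq_le_transpose G
      _ ≤ _ := hGt
  constructor
  · rw [hE]
    refine specNorm_sq_le _ (by positivity) fun v => ?_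
    calc ((X - P * X) *ᵥ v) ⬝ᵥ ((X - P * X) *ᵥ v) ≤ (X *ᵥ v) ⬝ᵥ (X *ᵥ v) := hcontr v
      _ = (G *ᵥ v) ⬝ᵥ (G *ᵥ v) := hXG v
      _ ≤ specNorm G ^ 2 * (v ⬝ᵥ v) := specNorm_mulVec_le G v
      _ ≤ (specNorm S2 ^ 2 + specNorm K ^ 2) * (v ⬝ᵥ v) :=
          mul_le_mul_of_nonneg_right hGbound (dp_self_nonneg v)
  · rw [hE, frobNorm_sq_cols]
    have hGfrob : frobNorm G ^ 2 = frobNorm S2 ^ 2 + frobNorm K ^ 2 := by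
      rw [frobNorm_sq_rows G, hGGt, frobNorm_sq_rows S2, frobNorm_sq_rows K,
        ← Finset.sum_add_distrib]
      exact Finset.sum_congr rfl fun i _ => by simp [Matrix.add_apply]
    calc ∑ j, ((X - P * X) *ᵥ Pi.single j 1) ⬝ᵥ ((X - P * X) *ᵥ Pi.single j 1)
        ≤ ∑ j, (G *ᵥ Pi.single j 1) ⬝ᵥ (G *ᵥ Pi.single j 1) := by
          refine Finset.sum_le_sum fun j _ => ?_
          rw [← hXG (Pi.single j 1)]
          exact hcontr _
      _ = frobNorm G ^ 2 := (frobNorm_sq_cols G).symm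
      _ = _ := hGfrob


end LRA
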